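/- Let λ ∈ ℝ, let x, x̃ : ℤ/Nℤ → ℝ with sinh(x̃_k−x_k−λ) ≠ 0 and sinh(x_k−x̃_{k−1}−λ) ≠ 0 for all k, and define q : ℤ/Nℤ → ℝ by q_k = (sinh(x̃_k−x_k+λ)/sinh(x̃_k−x_k−λ))·(sinh(x_k−x̃_{k−1}+λ)/sinh(x_k−x̃_{k−1}−λ)). Then the monodromy matrix T = L_{N−1}·L_{N−2}·⋯·L_1·L_0 satisfies T · (e^{2x̃_{−1}}, 1)ᵀ = (∏_{k∈ℤ/Nℤ} (1−e^{4λ})·sinh(x_k−x̃_{k−1}+λ)/sinh(x̃_k−x_k−λ)) · (e^{2x̃_{−1}}, 1)ᵀ; in particular, (1−e^{4λ})^N·∏_{k∈ℤ/Nℤ} sinh(x_k−x̃_{k−1}+λ)/sinh(x̃_k−x_k−λ) is an eigenvalue of T. -/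

import Mathlib

/-- Transition matrix of the zero curvature representation of the Bäcklund
transformation for the symmetric hyperbolic multiplicative Toda-type system
(with `q_k = e^{2p_k}`). -/
noncomputable def hypMultTodaL (N : ℕ) (lam : ℝ) (x q : ZMod N → ℝ) (i : ℕ) :
    Matrix (Fin 2) (Fin 2) ℝ :=
  !![Real.exp (4 * lam) * q (i : ZMod N) - 1,
       Real.exp (2 * lam) * Real.exp (2 * x (i : ZMod N)) * (1 - q (i : ZMod N));
     Real.exp (2 * lam) * Real.exp (-(2 * x (i : ZMod N))) * (q (i : ZMod N) - 1),
       Real.exp (4 * lam) - q (i : ZMod N)]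

/-- Monodromy matrix `T = L_{N-1} ⬝ ⋯ ⬝ L_1 ⬝ L_0`. -/
noncomputable def hypMultTodaT (N : ℕ) (lam : ℝ) (x q : ZMod N → ℝ) :
    Matrix (Fin 2) (Fin 2) ℝ :=
  ((List.range N).reverse.map (hypMultTodaL N lam x q)).prod

lemma hypMultToda_row_aux (lam xk xtk xtm : ℝ)
    (h1 : Real.sinh (xtk - xk - lam) ≠ 0)
    (h2 : Real.sinh (xk - xtm - lam) ≠ 0) :
    let Q := (Real.sinh (xtk - xk + lam) / Real.sinh (xtk - xk - lam)) *
      (Real.sinh (xk - xtm + lam) / Real.sinh (xk - xtm - lam))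
    let nu := Real.exp (xtm - xtk) *
      ((1 - Real.exp (4 * lam)) * Real.sinh (xk - xtm + lam) / Real.sinh (xtk - xk - lam))
    (Real.exp (4 * lam) * Q - 1) * Real.exp (2 * xtm)
        + Real.exp (2 * lam) * Real.exp (2 * xk) * (1 - Q) = nu * Real.exp (2 * xtk) ∧
    Real.exp (2 * lam) * Real.exp (-(2 * xk)) * (Q - 1) * Real.exp (2 * xtm)
        + Real.exp (4 * lam) - Q = nu := by
  intro Q nu
  have e2 : ∀ t : ℝ, Real.exp (2 * t) = Real.exp t ^ 2 := fun t => by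
    rw [two_mul, Real.exp_add, sq]
  have e4 : Real.exp (4 * lam) = Real.exp lam ^ 4 := by
    rw [show (4:ℝ) * lam = lam + lam + (lam + lam) by ring, Real.exp_add, Real.exp_add]; ring
  have e2' : ∀ t : ℝ, Real.exp (t * 2) = Real.exp t ^ 2 := fun t => by rw [mul_comm, e2]
  have e4' : Real.exp (lam * 4) = Real.exp lam ^ 4 := by rw [mul_comm, e4]
  constructor <;>
  · apply mul_right_cancel₀ h1
    apply mul_right_cancel₀ h2
    simp only [Q, nu]
    field_simp
    rw [Real.sinh_eq, Real.sinh_eq, Real.sinh_eq, Real.sinh_eq]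
    simp only [e2, e4, e2', e4', Real.exp_sub, Real.exp_add, Real.exp_neg]
    field_simp
    ring

lemma hypMultToda_step (N : ℕ) [NeZero N] (lam : ℝ) (x xt q : ZMod N → ℝ)
    (hx1 : ∀ k : ZMod N, Real.sinh (xt k - x k - lam) ≠ 0)
    (hx2 : ∀ k : ZMod N, Real.sinh (x k - xt (k - 1) - lam) ≠ 0)
    (hq : ∀ k : ZMod N,
      q k = (Real.sinh (xt k - x k + lam) / Real.sinh (xt k - x k - lam)) *
        (Real.sinh (x k - xt (k - 1) + lam) / Real.sinh (x k - xt (k - 1) - lam)))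
    (m : ℕ) :
    (hypMultTodaL N lam x q m).mulVec ![Real.exp (2 * xt ((m : ZMod N) - 1)), 1] =
      (Real.exp (xt ((m : ZMod N) - 1) - xt (m : ZMod N)) *
          ((1 - Real.exp (4 * lam)) * Real.sinh (x (m : ZMod N) - xt ((m : ZMod N) - 1) + lam) /
            Real.sinh (xt (m : ZMod N) - x (m : ZMod N) - lam))) •
        ![Real.exp (2 * xt (m : ZMod N)), 1] := by
  obtain ⟨r1, r2⟩ := hypMultToda_row_aux lam (x (m : ZMod N)) (xt (m : ZMod N))
    (xt ((m : ZMod N) - 1)) (hx1 (m : ZMod N)) (hx2 (m : ZMod N))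
  funext i
  fin_cases i <;>
    simp [hypMultTodaL, Matrix.mulVec, dotProduct, Fin.sum_univ_two, hq (m : ZMod N)]
  · linear_combination r1
  · linear_combination r2

/-- For the periodic symmetric hyperbolic multiplicative
Toda-type system, `(1−e^{4λ})^N ∏ sinh(x_k − x̃_{k−1} + λ)/sinh(x̃_k − x_k − λ)`
is an eigenvalue of the monodromy matrix, with eigenvector `(e^{2x̃_{−1}}, 1)ᵀ`. -/
theorem hypMultToda_monodromy_eigenvalue
    (N : ℕ) [NeZero N] (lam : ℝ) (x xt q : ZMod N → ℝ)
    (hx1 : ∀ k : ZMod N, Real.sinh (xt k - x k - lam) ≠ 0)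
    (hx2 : ∀ k : ZMod N, Real.sinh (x k - xt (k - 1) - lam) ≠ 0)
    (hq : ∀ k : ZMod N,
      q k = (Real.sinh (xt k - x k + lam) / Real.sinh (xt k - x k - lam)) *
        (Real.sinh (x k - xt (k - 1) + lam) / Real.sinh (x k - xt (k - 1) - lam))) :
    (hypMultTodaT N lam x q).mulVec ![Real.exp (2 * xt (-1)), 1] =
      (∏ k : ZMod N, (1 - Real.exp (4 * lam)) *
          Real.sinh (x k - xt (k - 1) + lam) / Real.sinh (xt k - x k - lam)) •
        ![Real.exp (2 * xt (-1)), 1] ∧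
    Module.End.HasEigenvalue (Matrix.toLin' (hypMultTodaT N lam x q))
      ((1 - Real.exp (4 * lam)) ^ N *
        ∏ k : ZMod N, Real.sinh (x k - xt (k - 1) + lam) / Real.sinh (xt k - x k - lam)) := by
  set ν : ZMod N → ℝ := fun k => Real.exp (xt (k - 1) - xt k) *
    ((1 - Real.exp (4 * lam)) * Real.sinh (x k - xt (k - 1) + lam) /
      Real.sinh (xt k - x k - lam)) with hν
  -- main induction
  have aux : ∀ m : ℕ,
      (((List.range m).reverse.map (hypMultTodaL N lam x q)).prod).mulVec
          ![Real.exp (2 * xt (-1)), 1] =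
        (∏ j ∈ Finset.range m, ν (j : ZMod N)) • ![Real.exp (2 * xt ((m : ZMod N) - 1)), 1] := by
    intro m
    induction m with
    | zero => simp [Matrix.one_mulVec]
    | succ m ih =>
      rw [List.range_succ, List.reverse_append, List.reverse_singleton, List.singleton_append,
        List.map_cons, List.prod_cons, ← Matrix.mulVec_mulVec, ih, Matrix.mulVec_smul,
        hypMultToda_step N lam x xt q hx1 hx2 hq m, Finset.prod_range_succ, smul_smul]
      have hcast : ((m + 1 : ℕ) : ZMod N) - 1 = (m : ZMod N) := by push_cast; ring
      rw [hcast, hν]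
  have hN := aux N
  have hcastN : ((N : ℕ) : ZMod N) - 1 = (-1 : ZMod N) := by
    rw [ZMod.natCast_self, zero_sub]
  rw [hcastN] at hN
  -- identify the product over range N with the product over ZMod N
  have hprod : (∏ j ∈ Finset.range N, ν (j : ZMod N)) = ∏ k : ZMod N, ν k := by
    refine Finset.prod_nbij' (fun i => (i : ZMod N)) (fun k => k.val) (fun a _ => Finset.mem_univ _)
      (fun k _ => Finset.mem_range.mpr (ZMod.val_lt k)) ?_ ?_ (fun _ _ => rfl)
    · intro a ha
      exact ZMod.val_cast_of_lt (Finset.mem_range.mp ha)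
    · intro k _
      exact ZMod.natCast_rightInverse k
  -- telescoping of the exponential factors
  have htel : (∏ k : ZMod N, Real.exp (xt (k - 1) - xt k)) = 1 := by
    rw [← Real.exp_sum]
    have : ∑ k : ZMod N, (xt (k - 1) - xt k) = 0 := by
      rw [Finset.sum_sub_distrib]
      rw [Fintype.sum_equiv (Equiv.subRight (1 : ZMod N)) (fun k => xt (k - 1)) xt
        (fun k => rfl)]
      exact sub_self _
    rw [this, Real.exp_zero]
  have hsplit : (∏ k : ZMod N, ν k) =
      ∏ k : ZMod N, (1 - Real.exp (4 * lam)) *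
        Real.sinh (x k - xt (k - 1) + lam) / Real.sinh (xt k - x k - lam) := by
    rw [hν, Finset.prod_mul_distrib, htel, one_mul]
  rw [hprod, hsplit] at hN
  refine ⟨hN, ?_⟩
  have hc : (∏ k : ZMod N, (1 - Real.exp (4 * lam)) *
        Real.sinh (x k - xt (k - 1) + lam) / Real.sinh (xt k - x k - lam)) =
      (1 - Real.exp (4 * lam)) ^ N *
        ∏ k : ZMod N, Real.sinh (x k - xt (k - 1) + lam) / Real.sinh (xt k - x k - lam) := by
    simp_rw [mul_div_assoc]
    rw [Finset.prod_mul_distrib, Finset.prod_const, Finset.card_univ, ZMod.card]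
  have hvne : (![Real.exp (2 * xt (-1)), 1] : Fin 2 → ℝ) ≠ 0 := by
    intro h
    have := congrFun h 1
    simp at this
  exact Module.End.hasEigenvalue_of_hasEigenvector
    ⟨Module.End.mem_eigenspace_iff.mpr (by rw [Matrix.toLin'_apply, ← hc]; exact hN), hvne⟩
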